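/- Let X be a finite set and let f and g be fixed-point-free involutions of X. Then for every k ≥ 1, the number of orbits of the permutation f∘g on X having exactly k elements is even. Equivalently, the cycle type of f∘g (counting fixed points as cycles of length 1) is of the form λλ = (λ1,λ1,λ2,λ2,…), i.e., every part occurs an even number of times. -/

import Mathlib

/-- The (forward) orbit of `x` under a permutation `h` of a finite set. -/
def permOrbit {X : Type*} (h : Equiv.Perm X) (x : X) : Set X :=
  { y | ∃ m : ℕ, (⇑h)^[m] x = y }

lemma even_ncard_of_fpf {α : Type*} (s : Set α) (hs : s.Finite) (I : α → α)
    (h1 : ∀ a ∈ s, I a ∈ s) (h2 : ∀ a ∈ s, I (I a) = a) (h3 : ∀ a ∈ s, I a ≠ a) :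
    Even s.ncard := by
  classical
  rw [Set.ncard_eq_toFinset_card _ hs]
  set t := hs.toFinset with ht
  have hmem : ∀ a, a ∈ t ↔ a ∈ s := fun a => hs.mem_toFinset
  have hsum : ∑ x ∈ t, (1 : ZMod 2) = 0 :=
    Finset.sum_involution (fun a _ => I a) (fun a ha => by decide)
      (fun a ha h => h3 a ((hmem a).1 ha)) (fun a ha => (hmem _).2 (h1 a ((hmem a).1 ha)))
      (fun a ha => h2 a ((hmem a).1 ha))
  rw [Finset.sum_const, nsmul_eq_mul, mul_one] at hsum
  exact even_iff_two_dvd.mpr ((ZMod.natCast_eq_zero_iff _ 2).1 hsum)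

theorem even_card_orbits_of_involutions {X : Type*} [Fintype X]
    (f g : Equiv.Perm X)
    (hf : ∀ x, f (f x) = x) (hf' : ∀ x, f x ≠ x)
    (hg : ∀ x, g (g x) = x) (hg' : ∀ x, g x ≠ x)
    (k : ℕ) (hk : 1 ≤ k) :
    Even (Set.ncard { S : Set X | (∃ x : X, S = permOrbit (f * g) x) ∧ S.ncard = k }) := by
  classical
  set c : Equiv.Perm X := f * g with hc
  -- basic pointwise identity : f (c y) = c⁻¹ (f y)
  have hfinv : f⁻¹ = f := by
    ext y; rw [Equiv.Perm.inv_def, Equiv.symm_apply_eq, hf]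
  have hginv : g⁻¹ = g := by
    ext y; rw [Equiv.Perm.inv_def, Equiv.symm_apply_eq, hg]
  have hkey : ∀ y, f (c y) = c⁻¹ (f y) := by
    intro y
    simp only [hc, mul_inv_rev, hfinv, hginv, Equiv.Perm.mul_apply, hf, hg]
  -- key: f x is never in the forward orbit of x under c
  have hnotin : ∀ x : X, f x ∉ permOrbit c x := by
    rintro x ⟨m, hm⟩
    have step : ∀ j, j ≤ m → f ((⇑c)^[j] x) = (⇑c)^[m - j] x := by
      intro j
      induction j with
      | zero => intro _; simpa using hm.symm
      | succ j ih =>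
        intro hj
        have hj' : j ≤ m := Nat.le_of_succ_le hj
        rw [Function.iterate_succ_apply', hkey, ih hj']
        have h1 : 1 ≤ m - j := Nat.le_sub_of_add_le (by omega)
        have h2 : m - j = (m - j - 1) + 1 := by omega
        have h3 : m - j - 1 = m - (j + 1) := by omega
        rw [h2, Function.iterate_succ_apply', Equiv.Perm.inv_def, Equiv.symm_apply_apply, h3]
    rcases Nat.even_or_odd m with ⟨j, hjm⟩ | ⟨j, hjm⟩
    · -- m = 2j : f fixes c^[j] x
      have := step j (by omega)
      rw [show m - j = j by omega] at this
      exact hf' _ this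
    · -- m = 2j+1 : g fixes c^[j] x
      have := step j (by omega)
      rw [show m - j = j + 1 by omega, Function.iterate_succ_apply'] at this
      -- f y = c y where y = c^[j] x ; but c y = f (g y), so g y = y
      set y := (⇑c)^[j] x
      have : f y = f (g y) := by
        rw [this]; simp only [hc, Equiv.Perm.mul_apply]
      exact hg' y (f.injective this).symm
  -- f maps orbits to orbits
  have himage : ∀ x : X, f '' permOrbit c x = permOrbit c (f x) := by
    have hcycle : ∀ x y : X, y ∈ permOrbit c x ↔ c.SameCycle x y := by
      intro x y
      constructor
      · rintro ⟨m, hm⟩; exact ⟨m, by rwa [zpow_natCast, ← Equiv.Perm.iterate_eq_pow] at *⟩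
      · intro h
        obtain ⟨i, hi, hix⟩ := h.exists_pow_eq'
        exact ⟨i, by rwa [Equiv.Perm.iterate_eq_pow]⟩
    have hconj : ∀ (i : ℤ) (y : X), f ((c ^ i) y) = (c ^ (-i)) (f y) := by
      have hcf : f * c * f⁻¹ = c⁻¹ := by
        ext y
        simp only [hc, mul_inv_rev, hfinv, hginv, Equiv.Perm.mul_apply, hf, hg]
      intro i y
      have : f * c ^ i * f⁻¹ = c ^ (-i) := by
        have := map_zpow (MulAut.conj f) c i
        simp only [MulAut.conj_apply] at this
        rw [this, hcf, zpow_neg, inv_zpow]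
      calc f ((c ^ i) y) = (f * c ^ i * f⁻¹) (f y) := by
            simp [Equiv.Perm.mul_apply, hfinv, hf]
        _ = (c ^ (-i)) (f y) := by rw [this]
    intro x
    ext y
    simp only [Set.mem_image, hcycle]
    constructor
    · rintro ⟨z, ⟨i, hi⟩, rfl⟩
      exact ⟨-i, by rw [← hi, hconj]⟩
    · rintro ⟨i, hi⟩
      refine ⟨(c ^ (-i)) x, ⟨-i, rfl⟩, ?_⟩
      rw [hconj, neg_neg, hi]
  -- apply the involution lemma with I = image under f
  set T := { S : Set X | (∃ x : X, S = permOrbit c x) ∧ S.ncard = k } with hT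
  have hfin : T.Finite := Set.toFinite T
  refine even_ncard_of_fpf T hfin (fun S => f '' S) ?_ ?_ ?_
  · rintro S ⟨⟨x, rfl⟩, hSk⟩
    exact ⟨⟨f x, himage x⟩, by rwa [Set.ncard_image_of_injective _ f.injective]⟩
  · rintro S ⟨⟨x, rfl⟩, -⟩
    rw [← Set.image_comp]
    have : ⇑f ∘ ⇑f = id := funext hf
    rw [this, Set.image_id]
  · rintro S ⟨⟨x, rfl⟩, -⟩ hEq
    have hx : x ∈ permOrbit c x := ⟨0, rfl⟩
    have : f x ∈ permOrbit c x := hEq ▸ Set.mem_image_of_mem f hx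
    exact hnotin x this
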